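/- Explicit product formula: if L_pc ∘ L_cc^j ∘ L_cp = 0 for all j ∈ ℕ, then for all n, n' ≥ 1, Δ ∘ L^n ∘ Δ⊥ ∘ L^{n'} ∘ Δ = ∑_{j=1}^{n} ∑_{j'=1}^{n'} L_pp^{j−1} ∘ L_pc ∘ L_cc^{n−j+j'−1} ∘ L_cp ∘ L_pp^{n'−j'}, which equals 0. -/
import Mathlib

section Aux
variable {R : Type*} [Ring R] (L p : R)

private lemma q_idem (hp : p * p = p) : (1 - p) * (1 - p) = 1 - p := by
  have h : (1 - p) * (1 - p) = 1 - p - p + p * p := by noncomm_ring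
  rw [h, hp]; abel

private lemma pq0 (hp : p * p = p) : p * (1 - p) = 0 := by
  rw [mul_sub, mul_one, hp, sub_self]

private lemma qp0 (hp : p * p = p) : (1 - p) * p = 0 := by
  rw [sub_mul, one_mul, hp, sub_self]

private lemma pc_cc_q (hp : p * p = p) (k : ℕ) :
    (p*L*(1-p)) * ((1-p)*L*(1-p))^k * (1-p) = (p*L*(1-p)) * ((1-p)*L*(1-p))^k := by
  cases k with
  | zero => simp only [pow_zero, mul_one]; rw [mul_assoc, q_idem _ hp]
  | succ k =>
    rw [pow_succ, ← mul_assoc, mul_assoc _ _ (1-p), mul_assoc ((1-p)*L) (1-p) (1-p),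
      q_idem _ hp]

private lemma q_cc_cp' (hp : p * p = p) (k : ℕ) (W : R) :
    (1-p) * (((1-p)*L*(1-p))^k * (((1-p)*L*p) * W)) = ((1-p)*L*(1-p))^k * (((1-p)*L*p) * W) := by
  cases k with
  | zero =>
    simp only [pow_zero, one_mul, ← mul_assoc]
    rw [q_idem _ hp]
  | succ k =>
    simp only [pow_succ', ← mul_assoc]
    rw [q_idem _ hp]

private lemma h_cc_cp' (h : ∀ j : ℕ, (p * L * (1 - p)) * ((1 - p) * L * (1 - p)) ^ j * ((1 - p) * L * p) = 0)
    (k : ℕ) (W : R) :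
    (p*L*(1-p)) * (((1-p)*L*(1-p))^k * (((1-p)*L*p) * W)) = 0 := by
  have e := h k
  simp only [← mul_assoc] at e ⊢
  rw [e, zero_mul]

private lemma pc_cc_p' (hp : p * p = p) (k : ℕ) (X : R) :
    (p*L*(1-p)) * (((1-p)*L*(1-p))^k * (p * X)) = 0 := by
  cases k with
  | zero =>
    simp only [pow_zero, one_mul, ← mul_assoc]
    rw [mul_assoc (p*L) (1-p) p, qp0 _ hp, mul_zero, zero_mul]
  | succ k =>
    simp only [pow_succ, ← mul_assoc]
    rw [mul_assoc _ (1-p) p, qp0 _ hp, mul_zero, zero_mul]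

private lemma glue (c : R) (a b : ℕ) (X : R) : c^a * (c^b * X) = c^(a+b) * X := by
  rw [← mul_assoc, ← pow_add]

private lemma lemX (hp : p*p = p)
    (h : ∀ j : ℕ, (p * L * (1 - p)) * ((1 - p) * L * (1 - p)) ^ j * ((1 - p) * L * p) = 0) :
    ∀ n : ℕ, p * L ^ n = (p*L*p)^n * p
      + ∑ j ∈ Finset.range n, (p*L*p)^j * ((p*L*(1-p)) * ((1-p)*L*(1-p))^(n-1-j)) := by
  intro n
  induction n with
  | zero => simp
  | succ n ih =>
    rw [pow_succ, ← mul_assoc, ih, add_mul, Finset.sum_mul, Finset.sum_range_succ]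
    have e0 : n + 1 - 1 - n = 0 := by omega
    rw [e0, pow_zero, mul_one]
    have h1 : (p*L*p)^n * p * L = (p*L*p)^(n+1) * p + (p*L*p)^n * (p*L*(1-p)) := by
      have e1 : (p*L*p)^(n+1) * p = (p*L*p)^n * (p*L*p) := by
        rw [pow_succ, mul_assoc, mul_assoc (p*L) p p, hp]
      rw [e1]; noncomm_ring
    have h2 : ∀ j ∈ Finset.range n,
        (p*L*p)^j * ((p*L*(1-p)) * ((1-p)*L*(1-p))^(n-1-j)) * L
          = (p*L*p)^j * ((p*L*(1-p)) * ((1-p)*L*(1-p))^(n+1-1-j)) := by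
      intro j hj
      have hjn := Finset.mem_range.mp hj
      have e2 : n + 1 - 1 - j = (n-1-j) + 1 := by omega
      rw [e2, mul_assoc]
      congr 1
      have e := pc_cc_q L p hp (n-1-j)
      calc (p*L*(1-p)) * ((1-p)*L*(1-p))^(n-1-j) * L
          = ((p*L*(1-p)) * ((1-p)*L*(1-p))^(n-1-j) * (1-p)) * L := by rw [e]
        _ = (p*L*(1-p)) * ((1-p)*L*(1-p))^(n-1-j) * ((1-p)*L*p)
            + (p*L*(1-p)) * ((1-p)*L*(1-p))^(n-1-j) * ((1-p)*L*(1-p)) := by noncomm_ring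
        _ = (p*L*(1-p)) * ((1-p)*L*(1-p))^(n-1-j+1) := by
            rw [h (n-1-j), zero_add, pow_succ, ← mul_assoc (p*L*(1-p))]
    rw [Finset.sum_congr rfl h2, h1]
    abel

private lemma lemY (hp : p*p = p)
    (h : ∀ j : ℕ, (p * L * (1 - p)) * ((1 - p) * L * (1 - p)) ^ j * ((1 - p) * L * p) = 0) :
    ∀ n : ℕ, L ^ n * p = p * (p*L*p)^n
      + ∑ j ∈ Finset.range n, ((1-p)*L*(1-p))^(n-1-j) * (((1-p)*L*p) * (p*L*p)^j) := by
  intro n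
  induction n with
  | zero => simp
  | succ n ih =>
    rw [pow_succ', mul_assoc, ih, mul_add, Finset.mul_sum, Finset.sum_range_succ]
    have e0 : n + 1 - 1 - n = 0 := by omega
    rw [e0, pow_zero, one_mul]
    have h1 : L * (p * (p*L*p)^n) = p * (p*L*p)^(n+1) + ((1-p)*L*p) * (p*L*p)^n := by
      have e1 : p * (p*L*p)^(n+1) = (p*L*p) * (p*L*p)^n := by
        rw [pow_succ', ← mul_assoc, ← mul_assoc, ← mul_assoc, hp]
      rw [e1]; noncomm_ring
    have h2 : ∀ j ∈ Finset.range n,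
        L * (((1-p)*L*(1-p))^(n-1-j) * (((1-p)*L*p) * (p*L*p)^j))
          = ((1-p)*L*(1-p))^(n+1-1-j) * (((1-p)*L*p) * (p*L*p)^j) := by
      intro j hj
      have hjn := Finset.mem_range.mp hj
      have e2 : n + 1 - 1 - j = (n-1-j) + 1 := by omega
      rw [e2]
      have hZq := q_cc_cp' L p hp (n-1-j) ((p*L*p)^j)
      calc L * (((1-p)*L*(1-p))^(n-1-j) * (((1-p)*L*p) * (p*L*p)^j))
          = (p*L) * ((1-p) * (((1-p)*L*(1-p))^(n-1-j) * (((1-p)*L*p) * (p*L*p)^j)))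
            + ((1-p)*L) * ((1-p) * (((1-p)*L*(1-p))^(n-1-j) * (((1-p)*L*p) * (p*L*p)^j))) := by
            rw [hZq]; noncomm_ring
        _ = (p*L*(1-p)) * (((1-p)*L*(1-p))^(n-1-j) * (((1-p)*L*p) * (p*L*p)^j))
            + ((1-p)*L*(1-p)) * (((1-p)*L*(1-p))^(n-1-j) * (((1-p)*L*p) * (p*L*p)^j)) := by
            rw [← mul_assoc (p*L), ← mul_assoc ((1-p)*L)]
        _ = ((1-p)*L*(1-p))^(n-1-j+1) * (((1-p)*L*p) * (p*L*p)^j) := by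
            rw [h_cc_cp' L p h, zero_add, ← mul_assoc, ← pow_succ']
    rw [Finset.sum_congr rfl h2, h1]
    abel

private lemma lemMain (hp : p*p = p)
    (h : ∀ j : ℕ, (p * L * (1 - p)) * ((1 - p) * L * (1 - p)) ^ j * ((1 - p) * L * p) = 0)
    (n n' : ℕ) :
    p * L^n * (1-p) * L^n' * p
      = ∑ j ∈ Finset.range n, ∑ j' ∈ Finset.range n',
          (p*L*p)^j * (p*L*(1-p)) * ((1-p)*L*(1-p))^(n-1-j+(n'-1-j')) * ((1-p)*L*p) * (p*L*p)^j' := by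
  have SnQ : p * L^n * (1-p)
      = ∑ j ∈ Finset.range n, (p*L*p)^j * ((p*L*(1-p)) * ((1-p)*L*(1-p))^(n-1-j)) := by
    rw [lemX L p hp h n, add_mul, Finset.sum_mul, mul_assoc, pq0 _ hp, mul_zero, zero_add]
    refine Finset.sum_congr rfl fun j hj => ?_
    rw [mul_assoc]
    congr 1
    exact pc_cc_q L p hp (n-1-j)
  calc p * L^n * (1-p) * L^n' * p
      = (p * L^n * (1-p)) * (L^n' * p) := by rw [mul_assoc]
    _ = (∑ j ∈ Finset.range n, (p*L*p)^j * ((p*L*(1-p)) * ((1-p)*L*(1-p))^(n-1-j)))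
          * (p * (p*L*p)^n'
            + ∑ j' ∈ Finset.range n', ((1-p)*L*(1-p))^(n'-1-j') * (((1-p)*L*p) * (p*L*p)^j')) := by
        rw [SnQ, lemY L p hp h n']
    _ = ∑ j ∈ Finset.range n,
          ((p*L*p)^j * ((p*L*(1-p)) * ((1-p)*L*(1-p))^(n-1-j))) * (p * (p*L*p)^n')
        + ∑ j ∈ Finset.range n, ∑ j' ∈ Finset.range n',
          ((p*L*p)^j * ((p*L*(1-p)) * ((1-p)*L*(1-p))^(n-1-j)))
            * (((1-p)*L*(1-p))^(n'-1-j') * (((1-p)*L*p) * (p*L*p)^j')) := by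
        rw [mul_add, Finset.sum_mul, Finset.sum_mul_sum]
    _ = 0 + ∑ j ∈ Finset.range n, ∑ j' ∈ Finset.range n',
          (p*L*p)^j * (p*L*(1-p)) * ((1-p)*L*(1-p))^(n-1-j+(n'-1-j')) * ((1-p)*L*p) * (p*L*p)^j' := by
        congr 1
        · refine Finset.sum_eq_zero fun j hj => ?_
          have e := pc_cc_p' L p hp (n-1-j) ((p*L*p)^n')
          simp only [mul_assoc] at e ⊢
          rw [e, mul_zero]
        · refine Finset.sum_congr rfl fun j hj => Finset.sum_congr rfl fun j' hj' => ?_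
          simp only [mul_assoc]
          rw [glue]
    _ = _ := by rw [zero_add]

end Aux

/-- explicit product formula for `Δ L^n Δ⊥ L^{n'} Δ`, which vanishes under
the NCGD power conditions. -/
theorem explicit_product_formula (V : Type*) [AddCommGroup V] [Module ℂ V] [FiniteDimensional ℂ V]
    (L Δ : Module.End ℂ V) (hΔ : Δ * Δ = Δ)
    (h : ∀ j : ℕ, (Δ * L * (1 - Δ)) * ((1 - Δ) * L * (1 - Δ)) ^ j * ((1 - Δ) * L * Δ) = 0) :
    ∀ n n' : ℕ, 1 ≤ n → 1 ≤ n' →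
      Δ * L ^ n * (1 - Δ) * L ^ n' * Δ =
        (∑ j ∈ Finset.Icc 1 n, ∑ j' ∈ Finset.Icc 1 n',
          (Δ * L * Δ) ^ (j - 1) * (Δ * L * (1 - Δ)) *
            ((1 - Δ) * L * (1 - Δ)) ^ (n - j + j' - 1) *
            ((1 - Δ) * L * Δ) * (Δ * L * Δ) ^ (n' - j')) ∧
      (∑ j ∈ Finset.Icc 1 n, ∑ j' ∈ Finset.Icc 1 n',
          (Δ * L * Δ) ^ (j - 1) * (Δ * L * (1 - Δ)) *
            ((1 - Δ) * L * (1 - Δ)) ^ (n - j + j' - 1) *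
            ((1 - Δ) * L * Δ) * (Δ * L * Δ) ^ (n' - j')) = 0 := by
  intro n n' hn hn'
  constructor
  · rw [lemMain L Δ hΔ h n n']
    simp only [← Finset.Ico_add_one_right_eq_Icc, Finset.sum_Ico_eq_sum_range]
    rw [show n + 1 - 1 = n from by omega]
    refine Finset.sum_congr rfl fun j hj => ?_
    have hjn := Finset.mem_range.mp hj
    rw [show n' + 1 - 1 = n' from by omega, ← Finset.sum_range_reflect]
    refine Finset.sum_congr rfl fun j' hj' => ?_
    have hj'n := Finset.mem_range.mp hj'
    rw [show (1:ℕ) + j - 1 = j from by omega,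
      show n' - 1 - (n' - 1 - j') = j' from by omega,
      show n - (1 + j) + (1 + j') - 1 = n - 1 - j + j' from by omega,
      show n' - (1 + j') = n' - 1 - j' from by omega]
  · refine Finset.sum_eq_zero fun j hj => Finset.sum_eq_zero fun j' hj' => ?_
    have e := h_cc_cp' L Δ h (n - j + j' - 1) ((Δ*L*Δ)^(n'-j'))
    simp only [mul_assoc] at e ⊢
    rw [e, mul_zero]
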